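/- arXiv:1402.3895 — 2 statements merged into one kernel-verified Lean document; each statement's English description precedes it below -/
import Mathlib

section
/- Duality theorem (index codes and GLRCs), forward direction: Let F be a field, n, p, k natural numbers, and S : Fin n → Finset (Fin n) a side-information assignment with i ∉ S i. Let V be a k-dimensional subspace of F^(n·p) (viewing vectors as n blocks of p coordinates). Suppose that for every i there exists a linear map φ_i taking (the k-dimensional projection of x onto a basis of V's row space, together with the blocks x_j for j ∈ S i) to the block x_i, valid for all x ∈ F^(n·p). Then every vector z in the dual subspace V^⊥ satisfies: the i-th block of z is determined linearly by the blocks z_j for j ∈ S i; concretely, φ_i(0, {z_j}_{j∈S i}) = z_i for all z ∈ V^⊥. -/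
/-- The dual code of a linear code `C ⊆ F^ι` with respect to the standard
bilinear form: `{y | ∀ x ∈ C, ∑ i, x i * y i = 0}`. -/
def dualCode {F : Type*} [Field F] {ι : Type*} [Fintype ι]
    (C : Submodule F (ι → F)) : Submodule F (ι → F) where
  carrier := {y | ∀ x ∈ C, ∑ i, x i * y i = 0}
  zero_mem' := by intro x hx; simp
  add_mem' := by
    intro a b ha hb x hx
    simp [mul_add, Finset.sum_add_distrib, ha x hx, hb x hx]
  smul_mem' := by
    intro c y hy x hx
    simp [smul_eq_mul, mul_left_comm, ← Finset.mul_sum, hy x hx]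

/-- Duality between index codes and GLRCs, forward direction: if `V` is a valid
vector linear index code for the side information sets `S` (with linear decoding
maps `φ i`), then every codeword `z` of the dual code `V^⊥` satisfies the GLRC
recoverability conditions: `φ i (0, {z_j}_{j ∈ S i}) = z_i`. -/
theorem stmt_5 {F : Type*} [Field F] {n p k : ℕ}
    (S : Fin n → Finset (Fin n)) (hS : ∀ i, i ∉ S i)
    (V : Submodule F (Fin n × Fin p → F)) (hdim : Module.finrank F V = k)
    (v : Fin k → (Fin n × Fin p → F))
    (hspan : Submodule.span F (Set.range v) = V)
    (φ : ∀ i : Fin n,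
      ((Fin k → F) × ({j // j ∈ S i} × Fin p → F)) →ₗ[F] (Fin p → F))
    (hdec : ∀ (i : Fin n) (x : Fin n × Fin p → F),
      φ i (fun j => ∑ t, v j t * x t, fun jl => x (jl.1.1, jl.2)) =
        fun l => x (i, l)) :
    ∀ z ∈ dualCode V, ∀ i : Fin n,
      φ i (0, fun jl => z (jl.1.1, jl.2)) = fun l => z (i, l) := by
  intro z hz i
  have h1 : (fun j => ∑ t, v j t * z t) = (0 : Fin k → F) := by
    funext j
    exact hz (v j) (hspan ▸ Submodule.subset_span ⟨j, rfl⟩)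
  rw [← h1]
  exact hdec i z
end

section
/- Duality theorem, reverse direction: Let F be a field and D a subspace of F^(n·p) such that for every i there is a linear map ψ_i with ψ_i({z_j}_{j ∈ S i}) = z_i for all z ∈ D (every block of a codeword is linearly recoverable from its recoverability set). Let V = D^⊥ be the dual subspace. Then the broadcast of the projection of x onto V (i.e., the inner products of x with a basis of V) together with the side-information blocks {x_j}_{j ∈ S i} determines x_i: there exist linear decoding maps φ_i such that φ_i(V-encoding of x, {x_j}_{j ∈ S i}) = x_i for all x ∈ F^(n·p). -/
section Aux

variable {F : Type*} [Field F] {ι : Type*} [Fintype ι]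

/-- The standard bilinear form on `ι → F`. -/
noncomputable def stdBilin (F : Type*) [Field F] (ι : Type*) [Fintype ι] :
    LinearMap.BilinForm F (ι → F) :=
  LinearMap.mk₂ F (fun x y => ∑ i, x i * y i)
    (by intros; simp [add_mul, Finset.sum_add_distrib])
    (by intros; simp [Finset.mul_sum, smul_eq_mul, mul_assoc])
    (by intros; simp [mul_add, Finset.sum_add_distrib])
    (by intros; simp [Finset.mul_sum, smul_eq_mul, mul_left_comm])

lemma stdBilin_apply (x y : ι → F) : stdBilin F ι x y = ∑ i, x i * y i := rfl

lemma stdBilin_nondegenerate : (stdBilin F ι).Nondegenerate := by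
  classical
  refine (LinearMap.IsRefl.nondegenerate_iff_separatingLeft
    (by intro x y h; simpa [stdBilin_apply, mul_comm] using h)).2 ?_
  intro x hx
  funext i
  have := hx (Pi.single i 1)
  rw [stdBilin_apply] at this
  simpa [Pi.single_apply, mul_ite, Finset.sum_ite_eq'] using this

lemma stdBilin_isRefl : (stdBilin F ι).IsRefl := by
  intro x y h
  simpa [stdBilin_apply, mul_comm] using h

lemma dualCode_eq_orthogonal (C : Submodule F (ι → F)) :
    dualCode C = (stdBilin F ι).orthogonal C := by
  ext y
  simp [dualCode, LinearMap.BilinForm.mem_orthogonal_iff, LinearMap.BilinForm.IsOrtho,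
    stdBilin_apply, Submodule.mem_mk, AddSubmonoid.mem_mk, AddSubsemigroup.mem_mk]

lemma dualCode_dualCode (C : Submodule F (ι → F)) :
    dualCode (dualCode C) = C := by
  rw [dualCode_eq_orthogonal, dualCode_eq_orthogonal,
    LinearMap.BilinForm.orthogonal_orthogonal stdBilin_nondegenerate stdBilin_isRefl]

end Aux

/-- Duality between index codes and GLRCs, reverse direction: if every block of
every codeword of `D` is linearly recoverable from its recoverability set `S i`,
then the dual code `V = D^⊥` is a valid index code: encoding `x` by its inner
products with a basis of `V`, each user `i` can linearly decode `x_i` from the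
encoding and the side information blocks `{x_j}_{j ∈ S i}`. -/
theorem stmt_6 {F : Type*} [Field F] [Fintype F] {n p k : ℕ}
    (S : Fin n → Finset (Fin n)) (hS : ∀ i, i ∉ S i)
    (D : Submodule F (Fin n × Fin p → F))
    (ψ : ∀ i : Fin n, ({j // j ∈ S i} × Fin p → F) →ₗ[F] (Fin p → F))
    (hrec : ∀ (i : Fin n), ∀ z ∈ D,
      ψ i (fun jl => z (jl.1.1, jl.2)) = fun l => z (i, l))
    (v : Fin k → (Fin n × Fin p → F)) (hli : LinearIndependent F v)
    (hspan : Submodule.span F (Set.range v) = dualCode D) :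
    ∃ φ : ∀ i : Fin n,
        ((Fin k → F) × ({j // j ∈ S i} × Fin p → F)) →ₗ[F] (Fin p → F),
      ∀ (i : Fin n) (x : Fin n × Fin p → F),
        φ i (fun j => ∑ t, v j t * x t, fun jl => x (jl.1.1, jl.2)) =
          fun l => x (i, l) := by
  classical
  suffices h : ∀ i : Fin n, ∃ φi :
      ((Fin k → F) × ({j // j ∈ S i} × Fin p → F)) →ₗ[F] (Fin p → F),
      ∀ x : Fin n × Fin p → F,
        φi (fun j => ∑ t, v j t * x t, fun jl => x (jl.1.1, jl.2)) =
          fun l => x (i, l) by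
    choose φ hφ using h
    exact ⟨φ, hφ⟩
  intro i
  -- the encoding map
  set A : (Fin n × Fin p → F) →ₗ[F] (Fin k → F) :=
    LinearMap.pi (fun j => stdBilin F (Fin n × Fin p) (v j)) with hA
  set Bi : (Fin n × Fin p → F) →ₗ[F] ({j // j ∈ S i} × Fin p → F) :=
    LinearMap.funLeft F F (fun jl => (jl.1.1, jl.2)) with hBi
  set πi : (Fin n × Fin p → F) →ₗ[F] (Fin p → F) :=
    LinearMap.funLeft F F (fun l => (i, l)) with hπi
  set T := A.prod Bi with hT
  have hker : LinearMap.ker T ≤ LinearMap.ker πi := by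
    intro x hx
    rw [LinearMap.mem_ker] at hx ⊢
    have hx1 : A x = 0 := congrArg Prod.fst hx
    have hx2 : Bi x = 0 := congrArg Prod.snd hx
    -- x is orthogonal to every v j, hence to the span, hence lies in D
    have hxD : x ∈ D := by
      have hx1' : ∀ j, stdBilin F (Fin n × Fin p) (v j) x = 0 := fun j =>
        congrFun hx1 j
      have hxo : x ∈ (stdBilin F (Fin n × Fin p)).orthogonal
          (Submodule.span F (Set.range v)) := by
        rw [LinearMap.BilinForm.mem_orthogonal_iff]
        intro m hm
        induction hm using Submodule.span_induction with
        | mem y hy => obtain ⟨j, rfl⟩ := hy; exact hx1' j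
        | zero => simp [LinearMap.BilinForm.IsOrtho]
        | add y z _ _ hy hz =>
          simp only [LinearMap.BilinForm.IsOrtho, map_add, LinearMap.add_apply] at hy hz ⊢
          rw [hy, hz, add_zero]
        | smul c y _ hy =>
          simp only [LinearMap.BilinForm.IsOrtho, map_smul, LinearMap.smul_apply,
            smul_eq_mul] at hy ⊢
          rw [hy, mul_zero]
      rw [hspan, dualCode_eq_orthogonal,
        LinearMap.BilinForm.orthogonal_orthogonal stdBilin_nondegenerate
          stdBilin_isRefl] at hxo
      exact hxo
    have := hrec i x hxD
    have hside : (fun jl : {j // j ∈ S i} × Fin p => x (jl.1.1, jl.2)) = 0 := hx2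
    rw [hside, map_zero] at this
    exact this.symm
  -- factor πi through T
  let q := Submodule.liftQ (LinearMap.ker T) πi hker
  let e := T.quotKerEquivRange
  let f : LinearMap.range T →ₗ[F] (Fin p → F) := q ∘ₗ e.symm.toLinearMap
  obtain ⟨φi, hφi⟩ := f.exists_extend
  refine ⟨φi, fun x => ?_⟩
  have hTx : (fun j => ∑ t, v j t * x t, fun jl : {j // j ∈ S i} × Fin p =>
      x (jl.1.1, jl.2)) = T x := rfl
  have hmem : T x ∈ LinearMap.range T := LinearMap.mem_range_self T x
  have h1 : φi (T x) = f ⟨T x, hmem⟩ := by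
    have := congrFun (congrArg DFunLike.coe hφi) ⟨T x, hmem⟩
    simpa using this
  have h2 : (⟨T x, hmem⟩ : LinearMap.range T) =
      e (Submodule.Quotient.mk x) := by
    apply Subtype.ext
    simp [e, LinearMap.quotKerEquivRange_apply_mk]
  rw [hTx, h1, h2]
  simp only [f, LinearMap.coe_comp, Function.comp_apply, LinearEquiv.coe_coe,
    LinearEquiv.symm_apply_apply]
  have : q (Submodule.Quotient.mk x) = πi x := rfl
  rw [this]
  rfl
end
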